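/- Let v, k, λ be natural numbers with λ ≥ 2 and k ≥ λ, and let N be a symmetric v × v matrix with entries in {0, 1} all of whose diagonal entries equal 1, satisfying N · Nᵀ = (k − λ)·I + λ·J, where I is the identity matrix and J is the all-one matrix (i.e., N is a symmetric incidence matrix with all-one diagonal of a symmetric 2-(v, k, λ) block design). Then A = N − I is the adjacency matrix of a strongly regular graph with parameters (v, k − 1, λ − 2, λ): the simple graph on v vertices in which u and w are adjacent iff u ≠ w and N(u, w) = 1 is (k−1)-regular, every pair of adjacent vertices has exactly λ − 2 common neighbours, and every pair of distinct non-adjacent vertices has exactly λ common neighbours. -/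

import Mathlib

open Matrix

/-- If `N` is a symmetric `v × v` 0-1 matrix with all-one diagonal
satisfying `N * Nᵀ = (k - λ) • I + λ • J` (a symmetric incidence matrix with all-one
diagonal of a symmetric 2-(v, k, λ) design), where `λ ≥ 2` and `k ≥ λ`, then `N - I` is
the adjacency matrix of a strongly regular graph with parameters `(v, k - 1, λ - 2, λ)`:
the graph on `v` vertices with `u ~ w` iff `u ≠ w` and `N u w = 1` is `(k-1)`-regular,
adjacent vertices have exactly `λ - 2` common neighbours, and distinct non-adjacent
vertices have exactly `λ` common neighbours. -/
theorem srg_from_symmetric_design_allOne_diagonal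
    (v k lam : ℕ) (hlam : 2 ≤ lam) (hk : lam ≤ k)
    (N : Matrix (Fin v) (Fin v) ℤ)
    (hsymm : N.IsSymm)
    (h01 : ∀ i j, N i j = 0 ∨ N i j = 1)
    (hdiag : ∀ i, N i i = 1)
    (hdes : N * Nᵀ = ((k : ℤ) - (lam : ℤ)) • (1 : Matrix (Fin v) (Fin v) ℤ) +
      (lam : ℤ) • Matrix.of (fun _ _ => (1 : ℤ)))
    (Γ : SimpleGraph (Fin v))
    (hΓ : ∀ u w : Fin v, Γ.Adj u w ↔ u ≠ w ∧ N u w = 1) :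
    (∀ u : Fin v, Nat.card (Γ.neighborSet u) = k - 1) ∧
    (∀ u w : Fin v, Γ.Adj u w → Nat.card (Γ.commonNeighbors u w) = lam - 2) ∧
    (∀ u w : Fin v, u ≠ w → ¬Γ.Adj u w → Nat.card (Γ.commonNeighbors u w) = lam) := by
  classical
  have hs : ∀ a b : Fin v, N a b = N b a := by
    intro a b
    have := congrFun (congrFun hsymm b) a
    simpa [Matrix.transpose_apply] using this
  have hentry : ∀ u w : Fin v, (∑ j, N u j * N w j) =
      ((k : ℤ) - lam) * (if u = w then 1 else 0) + lam := by
    intro u w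
    have h := congrFun (congrFun hdes u) w
    simp only [Matrix.mul_apply, Matrix.transpose_apply, Matrix.add_apply,
      Matrix.smul_apply, Matrix.one_apply, Matrix.of_apply, smul_eq_mul, mul_one] at h
    exact h
  have hrow : ∀ u : Fin v, (∑ j, N u j) = (k : ℤ) := by
    intro u
    have h := hentry u u
    simp only [if_pos rfl, mul_one] at h
    have h2 : (∑ j, N u j) = ∑ j, N u j * N u j := by
      refine Finset.sum_congr rfl (fun j _ => ?_)
      rcases h01 u j with h' | h' <;> simp [h']
    rw [h2, h]; simp
  -- neighbor count
  have hcount : ∀ u : Fin v,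
      ((Finset.univ.filter (fun w => Γ.Adj u w)).card : ℤ) = (k : ℤ) - 1 := by
    intro u
    rw [Finset.card_filter]
    push_cast
    have hterm : ∀ w : Fin v, (if Γ.Adj u w then (1 : ℤ) else 0)
        = N u w - (if w = u then 1 else 0) := by
      intro w
      by_cases hw : w = u
      · subst hw
        simp [Γ.loopless, hdiag]
      · rcases h01 u w with h' | h'
        · have had : ¬ Γ.Adj u w := by simp [hΓ, h']
          simp [had, h', hw]
        · have had : Γ.Adj u w := (hΓ u w).mpr ⟨Ne.symm hw, h'⟩
          simp [had, h', hw]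
    calc (∑ w, if Γ.Adj u w then (1 : ℤ) else 0)
        = ∑ w, (N u w - if w = u then 1 else 0) :=
          Finset.sum_congr rfl (fun w _ => hterm w)
      _ = (∑ w, N u w) - ∑ w, (if w = u then (1 : ℤ) else 0) :=
          Finset.sum_sub_distrib (fun w => N u w) (fun w => if w = u then (1 : ℤ) else 0)
      _ = (k : ℤ) - 1 := by
          rw [hrow, Finset.sum_ite_eq' Finset.univ u (fun _ => (1 : ℤ))]
          simp
  -- common neighbors count
  have hcommon : ∀ u w : Fin v, u ≠ w →
      ((Finset.univ.filter (fun j => Γ.Adj u j ∧ Γ.Adj w j)).card : ℤ)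
        = (lam : ℤ) - 2 * N u w := by
    intro u w huw
    rw [Finset.card_filter]
    push_cast
    have hterm : ∀ j : Fin v, (if Γ.Adj u j ∧ Γ.Adj w j then (1 : ℤ) else 0)
        = N u j * N w j - (if j = u then N u w else 0) - (if j = w then N u w else 0) := by
      intro j
      by_cases hju : j = u
      · subst hju
        simp [Γ.loopless, hdiag, huw, hs j w]
      · by_cases hjw : j = w
        · subst hjw
          simp [Γ.loopless, hdiag, Ne.symm huw]
        · rcases h01 u j with h1 | h1 <;> rcases h01 w j with h2 | h2 <;>
            simp [hΓ, h1, h2, hju, hjw, Ne.symm hju, Ne.symm hjw]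
    calc (∑ j, if Γ.Adj u j ∧ Γ.Adj w j then (1 : ℤ) else 0)
        = ∑ j, (N u j * N w j - (if j = u then N u w else 0)
            - (if j = w then N u w else 0)) :=
          Finset.sum_congr rfl (fun j _ => hterm j)
      _ = (∑ j, N u j * N w j) - (∑ j, if j = u then N u w else 0)
            - (∑ j, if j = w then N u w else 0) := by
          rw [Finset.sum_sub_distrib, Finset.sum_sub_distrib]
      _ = (lam : ℤ) - 2 * N u w := by
          rw [hentry u w, Finset.sum_ite_eq' Finset.univ u (fun _ => N u w),
            Finset.sum_ite_eq' Finset.univ w (fun _ => N u w)]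
          simp [huw]
          ring
  refine ⟨?_, ?_, ?_⟩
  · intro u
    have hfin : (Γ.neighborSet u).toFinset = Finset.univ.filter (fun w => Γ.Adj u w) := by
      ext x; simp
    have h1 : Nat.card (Γ.neighborSet u)
        = (Finset.univ.filter (fun w => Γ.Adj u w)).card := by
      rw [Nat.card_eq_card_toFinset, hfin]
    have h2 := hcount u
    rw [h1] at *
    omega
  · intro u w hadj
    have huw : u ≠ w := Γ.ne_of_adj hadj
    have hNuw : N u w = 1 := ((hΓ u w).mp hadj).2
    have hfin : (Γ.commonNeighbors u w).toFinset
        = Finset.univ.filter (fun j => Γ.Adj u j ∧ Γ.Adj w j) := by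
      ext x; simp [SimpleGraph.mem_commonNeighbors]
    have h1 : Nat.card (Γ.commonNeighbors u w)
        = (Finset.univ.filter (fun j => Γ.Adj u j ∧ Γ.Adj w j)).card := by
      rw [Nat.card_eq_card_toFinset, hfin]
    have h2 := hcommon u w huw
    rw [hNuw] at h2
    rw [h1]
    omega
  · intro u w huw hnadj
    have hNuw : N u w = 0 := by
      rcases h01 u w with h' | h'
      · exact h'
      · exact absurd ((hΓ u w).mpr ⟨huw, h'⟩) hnadj
    have hfin : (Γ.commonNeighbors u w).toFinset
        = Finset.univ.filter (fun j => Γ.Adj u j ∧ Γ.Adj w j) := by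
      ext x; simp [SimpleGraph.mem_commonNeighbors]
    have h1 : Nat.card (Γ.commonNeighbors u w)
        = (Finset.univ.filter (fun j => Γ.Adj u j ∧ Γ.Adj w j)).card := by
      rw [Nat.card_eq_card_toFinset, hfin]
    have h2 := hcommon u w huw
    rw [hNuw] at h2
    rw [h1]
    omega
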